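/- For every fixed integer m ≥ 0, as n → ∞ one has φ²_{n,m} ~ C²_m · (27/2)^n · n^{-5/2}, i.e. lim_{n→∞} φ²_{n,m} · (2/27)^n · n^{5/2} = C²_m, where C²_m = (√3 · (2m+1)! / (4√π · (m!)²)) · (9/4)^m. -/

import Mathlib

/-- The number of rooted type II triangulations of a disc with m+2 boundary
vertices and n internal vertices. -/
noncomputable def phi2 (n m : ℕ) : ℝ :=
  (2 ^ (n + 1) * Nat.factorial (2 * m + 1) * Nat.factorial (2 * m + 3 * n) : ℝ) /
    ((Nat.factorial m) ^ 2 * Nat.factorial n * Nat.factorial (2 * m + 2 * n + 2))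

/-- The constant C²_m. -/
noncomputable def C2 (m : ℕ) : ℝ :=
  (Real.sqrt 3 * Nat.factorial (2 * m + 1)) /
    (4 * Real.sqrt Real.pi * (Nat.factorial m) ^ 2) * (9 / 4) ^ m

open Filter Real Stirling

lemma fact_eq_stirling (k : ℕ) (hk : 0 < k) :
    (k.factorial : ℝ) = stirlingSeq k * (Real.sqrt (2 * k) * ((k : ℝ) / Real.exp 1) ^ k) := by
  have hk0 : (0:ℝ) < k := by exact_mod_cast hk
  have h : (0:ℝ) < Real.sqrt (2 * k) * ((k : ℝ) / Real.exp 1) ^ k := by positivity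
  rw [stirlingSeq, div_mul_cancel₀ _ h.ne']

lemma stirling_ne (k : ℕ) (hk : 0 < k) : stirlingSeq k ≠ 0 := by
  cases k with
  | zero => omega
  | succ j => exact (stirlingSeq'_pos j).ne'

lemma key_identity (m n : ℕ) (hn : 1 ≤ n) :
    phi2 n m * (2 / 27 : ℝ) ^ n * (n : ℝ) ^ ((5 : ℝ) / 2)
      = (stirlingSeq (2*m+3*n) / (stirlingSeq n * stirlingSeq (2*m+2*n+2)))
        * Real.sqrt ((2*m+3*n : ℝ) / (2*(2*m+2*n+2)))
        * (Real.exp 1 ^ 2 * ((2*m+3*n : ℝ)/(3*n)) ^ (2*m+3*n)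
            / (((2*m+2*n+2 : ℝ))/(2*n)) ^ (2*m+2*n+2))
        * (2 * (Nat.factorial (2*m+1) : ℝ) / ((Nat.factorial m : ℝ))^2 * (9/4)^m / 4) := by
  have hn0 : (0:ℝ) < n := by exact_mod_cast hn
  have he : (0:ℝ) < Real.exp 1 := Real.exp_pos 1
  have ha0 : (0:ℝ) < (2*m+3*n : ℝ) := by positivity
  have hb0 : (0:ℝ) < (2*m+2*n+2 : ℝ) := by positivity
  have h52 : (n:ℝ) ^ ((5:ℝ)/2) = (n:ℝ)^2 * Real.sqrt n := by
    rw [Real.sqrt_eq_rpow, ← Real.rpow_natCast (n:ℝ) 2, ← Real.rpow_add hn0]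
    norm_num
  have hsq : Real.sqrt ((2*m+3*n : ℝ) / (2*(2*m+2*n+2)))
      = Real.sqrt (2*(2*m+3*n) : ℝ) * Real.sqrt n
        / (Real.sqrt (2*(n:ℝ)) * Real.sqrt (2*(2*m+2*n+2) : ℝ)) := by
    rw [← Real.sqrt_mul (by positivity) (n:ℝ), ← Real.sqrt_mul (by positivity),
      ← Real.sqrt_div (by positivity)]
    congr 1
    field_simp
  have hP : ((2*m+3*n : ℝ) / Real.exp 1) ^ (2*m+3*n)
      = ((2*m+3*n : ℝ)/(3*n)) ^ (2*m+3*n) * ((3*(n:ℝ)) / Real.exp 1) ^ (2*m+3*n) := by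
    rw [← mul_pow]
    congr 1
    field_simp
  have hQ : ((2*m+2*n+2 : ℝ) / Real.exp 1) ^ (2*m+2*n+2)
      = ((2*m+2*n+2 : ℝ)/(2*n)) ^ (2*m+2*n+2) * ((2*(n:ℝ)) / Real.exp 1) ^ (2*m+2*n+2) := by
    rw [← mul_pow]
    congr 1
    field_simp
  have h3a : ((3*(n:ℝ)) / Real.exp 1) ^ (2*m+3*n)
      = 3 ^ (2*m+3*n) * (n:ℝ) ^ (2*m+3*n) / Real.exp 1 ^ (2*m+3*n) := by
    rw [div_pow, mul_pow]
  have h2b : ((2*(n:ℝ)) / Real.exp 1) ^ (2*m+2*n+2)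
      = 2 ^ (2*m+2*n+2) * (n:ℝ) ^ (2*m+2*n+2) / Real.exp 1 ^ (2*m+2*n+2) := by
    rw [div_pow, mul_pow]
  have hnn : ((n:ℝ) / Real.exp 1) ^ n = (n:ℝ) ^ n / Real.exp 1 ^ n := div_pow _ _ _
  have h27 : ((2:ℝ)/27) ^ n = 2 ^ n / 3 ^ (3*n) := by
    rw [div_pow, show (27:ℝ) = 3^3 by norm_num, ← pow_mul]
  have h94 : ((9:ℝ)/4) ^ m = 3 ^ (2*m) / 2 ^ (2*m) := by
    rw [div_pow, show (9:ℝ) = 3^2 by norm_num, show (4:ℝ) = 2^2 by norm_num,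
      ← pow_mul, ← pow_mul]
  have hSn : stirlingSeq n ≠ 0 := stirling_ne n hn
  have hSb : stirlingSeq (2*m+2*n+2) ≠ 0 := stirling_ne _ (by omega)
  have hQ0 : ((2*m+2*n+2 : ℝ)/(2*n)) ^ (2*m+2*n+2) ≠ 0 := by positivity
  have hs2n : Real.sqrt (2*(n:ℝ)) ≠ 0 := by positivity
  have hs2b : Real.sqrt (2*(2*m+2*n+2) : ℝ) ≠ 0 := by positivity
  have hm : ((Nat.factorial m : ℝ)) ≠ 0 := by positivity
  rw [phi2, fact_eq_stirling (2*m+3*n) (by omega), fact_eq_stirling n hn,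
    fact_eq_stirling (2*m+2*n+2) (by omega), h52, hsq]
  push_cast
  rw [hP, hQ, h3a, h2b, hnn, h27, h94]
  have heE : ∃ E : ℝ, Real.exp 1 = E ∧ E ≠ 0 := ⟨Real.exp 1, rfl, he.ne'⟩
  obtain ⟨E, hE, hE0⟩ := heE
  rw [hE]
  field_simp
  ring

lemma aux_pow_limit (c : ℝ) (j : ℕ) :
    Filter.Tendsto (fun n : ℕ => (1 + c / (n:ℝ)) ^ j * ((1 + c / (n:ℝ)) ^ n) ^ 3)
      Filter.atTop (nhds (Real.exp c ^ 3)) := by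
  have h1 : Filter.Tendsto (fun n : ℕ => (1 + c / (n:ℝ))) Filter.atTop (nhds 1) := by
    have := (tendsto_one_div_atTop_nhds_zero_nat).const_mul c
    simpa [div_eq_mul_inv, mul_comm] using (this.const_add 1)
  have h2 := Real.tendsto_one_add_div_pow_exp c
  have := (h1.pow j).mul (h2.pow 3)
  simpa using this

/-- φ²_{n,m} ~ C²_m · (27/2)^n · n^{-5/2} as n → ∞. -/
theorem phi2_asymptotics (m : ℕ) :
    Filter.Tendsto
      (fun n : ℕ => phi2 n m * (2 / 27 : ℝ) ^ n * (n : ℝ) ^ ((5 : ℝ) / 2))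
      Filter.atTop (nhds (C2 m)) := by
  have hπ : (0:ℝ) < Real.sqrt Real.pi := Real.sqrt_pos.2 Real.pi_pos
  -- Stirling part
  have t1 : Filter.Tendsto (fun n : ℕ => 2*m+3*n) atTop atTop :=
    tendsto_atTop_mono (fun n => by simp only [id_eq]; omega) tendsto_id
  have t2 : Filter.Tendsto (fun n : ℕ => 2*m+2*n+2) atTop atTop :=
    tendsto_atTop_mono (fun n => by simp only [id_eq]; omega) tendsto_id
  have hA : Filter.Tendsto
      (fun n : ℕ => stirlingSeq (2*m+3*n) / (stirlingSeq n * stirlingSeq (2*m+2*n+2)))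
      atTop (nhds (Real.sqrt Real.pi / (Real.sqrt Real.pi * Real.sqrt Real.pi))) :=
    (tendsto_stirlingSeq_sqrt_pi.comp t1).div
      ((tendsto_stirlingSeq_sqrt_pi.mul (tendsto_stirlingSeq_sqrt_pi.comp t2)))
      (by positivity)
  -- sqrt part
  have hone : Filter.Tendsto (fun n : ℕ => 1/(n:ℝ)) atTop (nhds 0) :=
    tendsto_one_div_atTop_nhds_zero_nat
  have hinner : Filter.Tendsto (fun n : ℕ => (2*(m:ℝ)+3*n) / (2*(2*m+2*n+2)))
      atTop (nhds (3/4)) := by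
    have hnum : Filter.Tendsto (fun n : ℕ => 2*(m:ℝ)*(1/n) + 3) atTop (nhds 3) := by
      simpa using (hone.const_mul (2*(m:ℝ))).add_const 3
    have hden : Filter.Tendsto (fun n : ℕ => 2*(2*(m:ℝ)*(1/n) + 2 + 2*(1/n))) atTop
        (nhds 4) := by
      have := ((hone.const_mul (2*(m:ℝ))).add_const 2).add (hone.const_mul 2)
      have := this.const_mul 2
      norm_num at this
      simpa [mul_add, mul_assoc] using this
    have := hnum.div hden (by norm_num)
    refine this.congr' ?_
    filter_upwards [eventually_ge_atTop 1] with n hn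
    have hn0 : (n:ℝ) ≠ 0 := by positivity
    rw [Pi.div_apply]
    field_simp
  have hB : Filter.Tendsto (fun n : ℕ => Real.sqrt ((2*(m:ℝ)+3*n) / (2*(2*m+2*n+2))))
      atTop (nhds (Real.sqrt 3 / 2)) := by
    have := (Real.continuous_sqrt.tendsto (3/4)).comp hinner
    have h34 : Real.sqrt ((3:ℝ)/4) = Real.sqrt 3 / 2 := by
      rw [Real.sqrt_div (by norm_num : (0:ℝ) ≤ 3), show Real.sqrt 4 = 2 by
        rw [show (4:ℝ) = 2^2 by norm_num, Real.sqrt_sq (by norm_num)]]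
    rw [← h34]
    exact this
  -- exponential part
  have hPl : Filter.Tendsto (fun n : ℕ => ((2*(m:ℝ)+3*n)/(3*n)) ^ (2*m+3*n))
      atTop (nhds (Real.exp (2*m))) := by
    have := aux_pow_limit (2*(m:ℝ)/3) (2*m)
    have hval : Real.exp (2*(m:ℝ)/3) ^ 3 = Real.exp (2*m) := by
      rw [← Real.exp_nat_mul]
      congr 1
      push_cast
      ring
    rw [hval] at this
    refine this.congr' ?_
    filter_upwards [eventually_ge_atTop 1] with n hn
    have hn0 : (n:ℝ) ≠ 0 := by positivity
    have hbase : 1 + (2*(m:ℝ)/3)/n = (2*(m:ℝ)+3*n)/(3*n) := by field_simp; ring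
    rw [hbase, ← pow_mul, ← pow_add, show 2*m + n*3 = 2*m+3*n from by omega]
  have hQl : Filter.Tendsto (fun n : ℕ => ((2*(m:ℝ)+2*n+2)/(2*n)) ^ (2*m+2*n+2))
      atTop (nhds (Real.exp (2*m+2))) := by
    have haux : Filter.Tendsto
        (fun n : ℕ => (1 + ((m:ℝ)+1) / n) ^ (2*m+2) * ((1 + ((m:ℝ)+1) / n) ^ n) ^ 2)
        atTop (nhds (Real.exp ((m:ℝ)+1) ^ 2)) := by
      have h1 : Filter.Tendsto (fun n : ℕ => (1 + ((m:ℝ)+1) / (n:ℝ))) atTop (nhds 1) := by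
        have := (tendsto_one_div_atTop_nhds_zero_nat).const_mul ((m:ℝ)+1)
        simpa [div_eq_mul_inv, mul_comm] using (this.const_add 1)
      have h2 := Real.tendsto_one_add_div_pow_exp ((m:ℝ)+1)
      simpa using (h1.pow (2*m+2)).mul (h2.pow 2)
    have hval : Real.exp ((m:ℝ)+1) ^ 2 = Real.exp (2*(m:ℝ)+2) := by
      rw [← Real.exp_nat_mul]
      congr 1
      push_cast
      ring
    rw [hval] at haux
    refine haux.congr' ?_
    filter_upwards [eventually_ge_atTop 1] with n hn
    have hn0 : (n:ℝ) ≠ 0 := by positivity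
    have hbase : 1 + ((m:ℝ)+1)/n = (2*(m:ℝ)+2*n+2)/(2*n) := by field_simp; ring
    rw [hbase, ← pow_mul, ← pow_add, show 2*m+2 + n*2 = 2*m+2*n+2 from by omega]
  have hC : Filter.Tendsto
      (fun n : ℕ => Real.exp 1 ^ 2 * ((2*(m:ℝ)+3*n)/(3*n)) ^ (2*m+3*n)
        / ((2*(m:ℝ)+2*n+2)/(2*n)) ^ (2*m+2*n+2)) atTop (nhds 1) := by
    have := ((hPl.const_mul (Real.exp 1 ^ 2)).div hQl (Real.exp_ne_zero _))
    have hval : Real.exp 1 ^ 2 * Real.exp (2*(m:ℝ)) / Real.exp (2*(m:ℝ)+2) = 1 := by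
      rw [Real.exp_one_pow, ← Real.exp_add,
        show ((2:ℕ):ℝ) + 2*(m:ℝ) = 2*(m:ℝ)+2 from by push_cast; ring,
        div_self (Real.exp_ne_zero _)]
    rw [hval] at this
    exact this.congr (fun n => rfl)
  -- combine
  have hK : Filter.Tendsto
      (fun n : ℕ =>
        (stirlingSeq (2*m+3*n) / (stirlingSeq n * stirlingSeq (2*m+2*n+2)))
          * Real.sqrt ((2*(m:ℝ)+3*n) / (2*(2*m+2*n+2)))
          * (Real.exp 1 ^ 2 * ((2*(m:ℝ)+3*n)/(3*n)) ^ (2*m+3*n)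
              / ((2*(m:ℝ)+2*n+2)/(2*n)) ^ (2*m+2*n+2))
          * (2 * (Nat.factorial (2*m+1) : ℝ) / ((Nat.factorial m : ℝ))^2 * (9/4)^m / 4))
      atTop (nhds (C2 m)) := by
    have := ((hA.mul hB).mul hC).mul_const
      (2 * (Nat.factorial (2*m+1) : ℝ) / ((Nat.factorial m : ℝ))^2 * (9/4)^m / 4)
    convert this using 2
    have hm : ((Nat.factorial m : ℝ)) ≠ 0 := by positivity
    have h1 : Real.sqrt Real.pi / (Real.sqrt Real.pi * Real.sqrt Real.pi)
        = 1 / Real.sqrt Real.pi := by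
      rw [div_mul_eq_div_div, div_self hπ.ne']
    rw [C2, h1]
    field_simp
  refine hK.congr' ?_
  filter_upwards [eventually_ge_atTop 1] with n hn
  exact (key_identity m n hn).symm
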